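/- Consider an L-layer GIN with parameter ζ = 0 as below, on a graph with 0/1 adjacency matrix A ∈ ℝ^{n×n} of maximum degree Δ, with every weight matrix satisfying ‖W^{(ℓ)}‖_∞ ≥ 1. Let X, X' ∈ ℝ^{n×K} with ‖X_v − X'_v‖_∞ ≤ ε for every node v, and suppose that at every intermediate layer ℓ ∈ {0, …, L−1} the hidden-state rows of the two runs satisfy ‖H^{(ℓ)}_v − H'^{(ℓ)}_v‖_∞ ≤ B for all v (bounded feature space assumption). Then for every node u: ‖H^{(L)}_u − H'^{(L)}_u‖_∞ ≤ (∏_{ℓ=1}^{L} ‖W^{(ℓ)}‖_∞) · (B · L · Δ + ε). -/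
import Mathlib


open scoped BigOperators

/-- An `L`-layer GIN with parameter `ζ`: `H⁽⁰⁾ = X` and
`H⁽ˡ⁺¹⁾ = φ⁽ˡ⁺¹⁾((A + (1+ζ)·I) H⁽ˡ⁾ W⁽ˡ⁺¹⁾)`, the activation applied entrywise. -/
noncomputable def gin {n : ℕ} (d : ℕ → ℕ) (ζ : ℝ) (φ : ℕ → ℝ → ℝ)
    (A : Matrix (Fin n) (Fin n) ℝ)
    (W : (ℓ : ℕ) → Matrix (Fin (d ℓ)) (Fin (d (ℓ + 1))) ℝ)
    (X : Matrix (Fin n) (Fin (d 0)) ℝ) : (ℓ : ℕ) → Matrix (Fin n) (Fin (d ℓ)) ℝ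
  | 0 => X
  | (ℓ + 1) =>
      ((A + (1 + ζ) • (1 : Matrix (Fin n) (Fin n) ℝ)) * gin d ζ φ A W X ℓ * W ℓ).map
        (φ (ℓ + 1))

/-- The operator norm of the map `h ↦ hW` on row vectors with respect to the `ℓ∞`
norm: the maximum absolute column sum of `W`. -/
noncomputable def opNormInf {m e : ℕ} (W : Matrix (Fin m) (Fin e) ℝ) : ℝ :=
  ⨆ j : Fin e, ∑ i : Fin m, |W i j|

lemma opNormInf_nonneg {m e : ℕ} (W : Matrix (Fin m) (Fin e) ℝ) : 0 ≤ opNormInf W :=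
  Real.iSup_nonneg fun _ => Finset.sum_nonneg fun _ _ => abs_nonneg _

lemma colSum_le_opNormInf {m e : ℕ} (W : Matrix (Fin m) (Fin e) ℝ) (j : Fin e) :
    ∑ i, |W i j| ≤ opNormInf W := by
  unfold opNormInf
  exact le_ciSup (f := fun j : Fin e => ∑ i : Fin m, |W i j|) (Set.Finite.bddAbove (Set.finite_range _)) j

lemma gin_aux {n : ℕ} (d : ℕ → ℕ) (φ : ℕ → ℝ → ℝ)
    (A : Matrix (Fin n) (Fin n) ℝ) (hA : ∀ i j, A i j = 0 ∨ A i j = 1)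
    (Δ : ℕ) (hΔ : ∀ u : Fin n, ∑ v : Fin n, A u v ≤ (Δ : ℝ))
    (W : (ℓ : ℕ) → Matrix (Fin (d ℓ)) (Fin (d (ℓ + 1))) ℝ)
    (hφ : ∀ ℓ, LipschitzWith 1 (φ ℓ))
    (X X' : Matrix (Fin n) (Fin (d 0)) ℝ) (ε B : ℝ)
    (hε : 0 ≤ ε) (hB0 : 0 ≤ B)
    (hX : ∀ v : Fin n, ‖X v - X' v‖ ≤ ε) :
    ∀ L : ℕ, (∀ ℓ < L, 1 ≤ opNormInf (W ℓ)) →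
      (∀ ℓ < L, ∀ v : Fin n, ‖gin d 0 φ A W X ℓ v - gin d 0 φ A W X' ℓ v‖ ≤ B) →
      ∀ u : Fin n,
        ‖gin d 0 φ A W X L u - gin d 0 φ A W X' L u‖ ≤
          (∏ ℓ ∈ Finset.range L, opNormInf (W ℓ)) * (B * (L : ℝ) * (Δ : ℝ) + ε) := by
  intro L
  induction L with
  | zero => intro _ _ u; simpa [gin] using hX u
  | succ L ih =>
    intro hW hB u
    have hWL : ∀ ℓ < L, 1 ≤ opNormInf (W ℓ) := fun ℓ h => hW ℓ (h.trans (Nat.lt_succ_self L))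
    have hBL : ∀ ℓ < L, ∀ v : Fin n,
        ‖gin d 0 φ A W X ℓ v - gin d 0 φ A W X' ℓ v‖ ≤ B :=
      fun ℓ h => hB ℓ (h.trans (Nat.lt_succ_self L))
    have hP1 : 1 ≤ ∏ ℓ ∈ Finset.range L, opNormInf (W ℓ) := by
      calc (1 : ℝ) = ∏ _ℓ ∈ Finset.range L, (1 : ℝ) := by simp
        _ ≤ ∏ ℓ ∈ Finset.range L, opNormInf (W ℓ) :=
            Finset.prod_le_prod (fun _ _ => zero_le_one)
              (fun ℓ hℓ => hWL ℓ (Finset.mem_range.mp hℓ))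
    set P := ∏ ℓ ∈ Finset.range L, opNormInf (W ℓ) with hP
    set D : ℝ := P * (B * (L : ℝ) * (Δ : ℝ) + ε) with hD
    have hD0 : 0 ≤ D := by
      have : (0 : ℝ) ≤ B * (L : ℝ) * (Δ : ℝ) + ε := by positivity
      nlinarith
    have hDB0 : 0 ≤ D + B * (Δ : ℝ) := by positivity
    have hrow : ∀ v : Fin n,
        ‖gin d 0 φ A W X L v - gin d 0 φ A W X' L v‖ ≤ D := fun v => ih hWL hBL v
    set H := gin d 0 φ A W X L with hH
    set H' := gin d 0 φ A W X' L with hH'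
    set E : Matrix (Fin n) (Fin (d L)) ℝ := H - H' with hE
    set M : Matrix (Fin n) (Fin n) ℝ :=
      A + ((1 : ℝ) + 0) • (1 : Matrix (Fin n) (Fin n) ℝ) with hM
    -- bound on rows of M * E
    have hME : ∀ i : Fin (d L), |(M * E) u i| ≤ D + B * (Δ : ℝ) := by
      intro i
      have hMeq : (M * E) u i = E u i + ∑ v, A u v * E v i := by
        simp only [hM, Matrix.mul_apply, Matrix.add_apply, Matrix.smul_apply,
          Matrix.one_apply, smul_eq_mul, add_mul, Finset.sum_add_distrib]
        simp [ite_mul, add_comm]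
      have h1 : |E u i| ≤ D := by
        have := norm_le_pi_norm (H u - H' u) i
        simp only [Real.norm_eq_abs, Pi.sub_apply] at this
        have h2 : H u - H' u = E u := rfl
        calc |E u i| ≤ ‖H u - H' u‖ := by
              simpa [hE, Matrix.sub_apply] using this
          _ ≤ D := hrow u
      have h2 : |∑ v, A u v * E v i| ≤ B * (Δ : ℝ) := by
        calc |∑ v, A u v * E v i| ≤ ∑ v, |A u v * E v i| := Finset.abs_sum_le_sum_abs _ _
          _ ≤ ∑ v, A u v * B := by
              refine Finset.sum_le_sum fun v _ => ?_
              have hAv : 0 ≤ A u v := by rcases hA u v with h | h <;> simp [h]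
              have hEv : |E v i| ≤ B := by
                have := norm_le_pi_norm (H v - H' v) i
                simp only [Real.norm_eq_abs, Pi.sub_apply] at this
                calc |E v i| ≤ ‖H v - H' v‖ := by
                      simpa [hE, Matrix.sub_apply] using this
                  _ ≤ B := hB L (Nat.lt_succ_self L) v
              rw [abs_mul, abs_of_nonneg hAv]
              exact mul_le_mul_of_nonneg_left hEv hAv
          _ = (∑ v, A u v) * B := by rw [Finset.sum_mul]
          _ ≤ (Δ : ℝ) * B := mul_le_mul_of_nonneg_right (hΔ u) hB0
          _ = B * (Δ : ℝ) := mul_comm _ _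
      calc |(M * E) u i| = |E u i + ∑ v, A u v * E v i| := by rw [hMeq]
        _ ≤ |E u i| + |∑ v, A u v * E v i| := abs_add_le _ _
        _ ≤ D + B * (Δ : ℝ) := add_le_add h1 h2
    -- entrywise bound on the output difference
    have key : ∀ j : Fin (d (L + 1)),
        |gin d 0 φ A W X (L + 1) u j - gin d 0 φ A W X' (L + 1) u j| ≤
          opNormInf (W L) * (D + B * (Δ : ℝ)) := by
      intro j
      have lip : ∀ a b : ℝ, |φ (L + 1) a - φ (L + 1) b| ≤ |a - b| := by
        intro a b
        have := (hφ (L + 1)).dist_le_mul a b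
        simpa [Real.dist_eq] using this
      have hunfold :
          gin d 0 φ A W X (L + 1) u j - gin d 0 φ A W X' (L + 1) u j =
            φ (L + 1) ((M * H * W L) u j) - φ (L + 1) ((M * H' * W L) u j) := by
        simp [gin, Matrix.map_apply, hM, hH, hH']
      rw [hunfold]
      refine (lip _ _).trans ?_
      have hent : (M * H * W L) u j - (M * H' * W L) u j = (M * E * W L) u j := by
        have : M * H * W L - M * H' * W L = M * E * W L := by
          rw [hE, Matrix.mul_sub, Matrix.sub_mul]
        calc (M * H * W L) u j - (M * H' * W L) u j
            = (M * H * W L - M * H' * W L) u j := by simp [Matrix.sub_apply]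
          _ = (M * E * W L) u j := by rw [this]
      rw [hent]
      calc |(M * E * W L) u j| = |∑ i, (M * E) u i * W L i j| := by rw [Matrix.mul_apply]
        _ ≤ ∑ i, |(M * E) u i * W L i j| := Finset.abs_sum_le_sum_abs _ _
        _ ≤ ∑ i, (D + B * (Δ : ℝ)) * |W L i j| := by
            refine Finset.sum_le_sum fun i _ => ?_
            rw [abs_mul]
            exact mul_le_mul_of_nonneg_right (hME i) (abs_nonneg _)
        _ = (D + B * (Δ : ℝ)) * ∑ i, |W L i j| := by rw [Finset.mul_sum]
        _ ≤ (D + B * (Δ : ℝ)) * opNormInf (W L) :=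
            mul_le_mul_of_nonneg_left (colSum_le_opNormInf _ j) hDB0
        _ = opNormInf (W L) * (D + B * (Δ : ℝ)) := mul_comm _ _
    -- combine
    have hWL0 : 0 ≤ opNormInf (W L) := opNormInf_nonneg _
    have hfinal : opNormInf (W L) * (D + B * (Δ : ℝ)) ≤
        (∏ ℓ ∈ Finset.range (L + 1), opNormInf (W ℓ)) *
          (B * ((L : ℝ) + 1) * (Δ : ℝ) + ε) := by
      rw [Finset.prod_range_succ, ← hP]
      have h1 : D + B * (Δ : ℝ) ≤ P * (B * ((L : ℝ) + 1) * (Δ : ℝ) + ε) := by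
        have hBΔ : (0 : ℝ) ≤ B * (Δ : ℝ) := by positivity
        have : B * (Δ : ℝ) ≤ P * (B * (Δ : ℝ)) := le_mul_of_one_le_left hBΔ hP1
        rw [hD]; nlinarith
      calc opNormInf (W L) * (D + B * (Δ : ℝ))
          ≤ opNormInf (W L) * (P * (B * ((L : ℝ) + 1) * (Δ : ℝ) + ε)) :=
            mul_le_mul_of_nonneg_left h1 hWL0
        _ = P * opNormInf (W L) * (B * ((L : ℝ) + 1) * (Δ : ℝ) + ε) := by ring
    have hgoal : ‖gin d 0 φ A W X (L + 1) u - gin d 0 φ A W X' (L + 1) u‖ ≤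
        opNormInf (W L) * (D + B * (Δ : ℝ)) := by
      rw [pi_norm_le_iff_of_nonneg (by positivity)]
      intro j
      simpa [Real.norm_eq_abs] using key j
    refine hgoal.trans ?_
    push_cast
    exact hfinal

/-- Theorem 3 (Lipschitz core, feature attacks on GINs with `ζ = 0`): on a graph with
0/1 adjacency matrix of maximum degree `Δ`, with weight matrices of `ℓ∞` operator norm
at least `1`, if every row of the feature perturbation has `ℓ∞` norm at most `ε` and at
every intermediate layer the hidden-state rows of the two runs differ by at most `B` in
`ℓ∞` norm, then every output row differs by at most
`(∏ ℓ, ‖W⁽ˡ⁾‖_∞) · (B·L·Δ + ε)` in `ℓ∞` norm. -/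
theorem gin_feature_attack_bound
    {n : ℕ} (L : ℕ) (d : ℕ → ℕ) (φ : ℕ → ℝ → ℝ)
    (A : Matrix (Fin n) (Fin n) ℝ) (hA : ∀ i j, A i j = 0 ∨ A i j = 1)
    (Δ : ℕ) (hΔ : ∀ u : Fin n, ∑ v : Fin n, A u v ≤ (Δ : ℝ))
    (W : (ℓ : ℕ) → Matrix (Fin (d ℓ)) (Fin (d (ℓ + 1))) ℝ)
    (hφ : ∀ ℓ, LipschitzWith 1 (φ ℓ))
    (hW : ∀ ℓ < L, 1 ≤ opNormInf (W ℓ))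
    (X X' : Matrix (Fin n) (Fin (d 0)) ℝ) (ε B : ℝ)
    (hX : ∀ v : Fin n, ‖X v - X' v‖ ≤ ε)
    (hB : ∀ ℓ < L, ∀ v : Fin n, ‖gin d 0 φ A W X ℓ v - gin d 0 φ A W X' ℓ v‖ ≤ B) :
    ∀ u : Fin n,
      ‖gin d 0 φ A W X L u - gin d 0 φ A W X' L u‖ ≤
        (∏ ℓ ∈ Finset.range L, opNormInf (W ℓ)) * (B * (L : ℝ) * (Δ : ℝ) + ε) := by
  intro u
  have hε : 0 ≤ ε := le_trans (norm_nonneg _) (hX u)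
  cases L with
  | zero => simpa [gin] using hX u
  | succ L =>
    have hB0 : 0 ≤ B := le_trans (norm_nonneg _) (hB 0 (Nat.succ_pos L) u)
    exact gin_aux d φ A hA Δ hΔ W hφ X X' ε B hε hB0 hX (L + 1) hW hB u
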